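/- arXiv:1303.0452 — 2 statements merged into one kernel-verified Lean document; each statement's English description precedes it below -/
import Mathlib

section
/- For all x ∈ [−1.2, 1.2], |cos x − (1 − 0.5x² + 0.0416525x⁴ − 0.00134386x⁶)| ≤ 0.0000336·x². -/
open Real

lemma nonneg_of_deriv (f g : ℝ → ℝ) (h0 : f 0 = 0)
    (hd : ∀ t : ℝ, HasDerivAt f (g t) t)
    (hg : ∀ t : ℝ, 0 ≤ t → 0 ≤ g t) {x : ℝ} (hx : 0 ≤ x) : 0 ≤ f x := by
  have hm : MonotoneOn f (Set.Ici (0:ℝ)) := by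
    apply monotoneOn_of_deriv_nonneg (convex_Ici 0)
    · exact fun t _ => (hd t).continuousAt.continuousWithinAt
    · intro t _
      exact (hd t).differentiableAt.differentiableWithinAt
    · intro t ht
      rw [(hd t).deriv]
      rw [interior_Ici] at ht
      exact hg t (le_of_lt ht)
  have := hm (Set.self_mem_Ici) (Set.mem_Ici.2 hx) hx
  linarith [h0 ▸ this]

lemma s1 : ∀ t : ℝ, 0 ≤ t → 0 ≤ t - Real.sin t := by
  apply nonneg_of_deriv _ (fun t => 1 - Real.cos t)
  · simp
  · intro t
    exact (hasDerivAt_id t).sub (Real.hasDerivAt_sin t)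
  · intro t _
    nlinarith [Real.cos_le_one t]

lemma c1 : ∀ t : ℝ, 0 ≤ t → 0 ≤ Real.cos t - (1 - t^2/2) := by
  apply nonneg_of_deriv _ (fun t => t - Real.sin t)
  · norm_num
  · intro t
    have h := (Real.hasDerivAt_cos t).sub
      ((hasDerivAt_const t (1:ℝ)).sub ((hasDerivAt_pow 2 t).div_const 2))
    refine h.congr_deriv ?_
    push_cast
    ring
  · exact s1

lemma s2 : ∀ t : ℝ, 0 ≤ t → 0 ≤ Real.sin t - (t - t^3/6) := by
  apply nonneg_of_deriv _ (fun t => Real.cos t - (1 - t^2/2))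
  · norm_num
  · intro t
    have h := (Real.hasDerivAt_sin t).sub
      ((hasDerivAt_id t).sub ((hasDerivAt_pow 3 t).div_const 6))
    refine h.congr_deriv ?_
    push_cast
    ring
  · exact c1

lemma c2 : ∀ t : ℝ, 0 ≤ t → 0 ≤ (1 - t^2/2 + t^4/24) - Real.cos t := by
  apply nonneg_of_deriv _ (fun t => Real.sin t - (t - t^3/6))
  · norm_num
  · intro t
    have h := (((hasDerivAt_const t (1:ℝ)).sub ((hasDerivAt_pow 2 t).div_const 2)).add
      ((hasDerivAt_pow 4 t).div_const 24)).sub (Real.hasDerivAt_cos t)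
    refine h.congr_deriv ?_
    push_cast
    ring
  · exact s2

lemma s3 : ∀ t : ℝ, 0 ≤ t → 0 ≤ (t - t^3/6 + t^5/120) - Real.sin t := by
  apply nonneg_of_deriv _ (fun t => (1 - t^2/2 + t^4/24) - Real.cos t)
  · norm_num
  · intro t
    have h := (((hasDerivAt_id t).sub ((hasDerivAt_pow 3 t).div_const 6)).add
      ((hasDerivAt_pow 5 t).div_const 120)).sub (Real.hasDerivAt_sin t)
    refine h.congr_deriv ?_
    push_cast
    ring
  · exact c2

lemma c3 : ∀ t : ℝ, 0 ≤ t → 0 ≤ Real.cos t - (1 - t^2/2 + t^4/24 - t^6/720) := by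
  apply nonneg_of_deriv _ (fun t => (t - t^3/6 + t^5/120) - Real.sin t)
  · norm_num
  · intro t
    have h := (Real.hasDerivAt_cos t).sub
      ((((hasDerivAt_const t (1:ℝ)).sub ((hasDerivAt_pow 2 t).div_const 2)).add
        ((hasDerivAt_pow 4 t).div_const 24)).sub ((hasDerivAt_pow 6 t).div_const 720))
    refine h.congr_deriv ?_
    push_cast
    ring
  · exact s3

lemma s4 : ∀ t : ℝ, 0 ≤ t → 0 ≤ Real.sin t - (t - t^3/6 + t^5/120 - t^7/5040) := by
  apply nonneg_of_deriv _ (fun t => Real.cos t - (1 - t^2/2 + t^4/24 - t^6/720))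
  · norm_num
  · intro t
    have h := (Real.hasDerivAt_sin t).sub
      ((((hasDerivAt_id t).sub ((hasDerivAt_pow 3 t).div_const 6)).add
        ((hasDerivAt_pow 5 t).div_const 120)).sub ((hasDerivAt_pow 7 t).div_const 5040))
    refine h.congr_deriv ?_
    push_cast
    ring
  · exact c3

lemma c4 : ∀ t : ℝ, 0 ≤ t →
    0 ≤ (1 - t^2/2 + t^4/24 - t^6/720 + t^8/40320) - Real.cos t := by
  apply nonneg_of_deriv _ (fun t => Real.sin t - (t - t^3/6 + t^5/120 - t^7/5040))
  · norm_num
  · intro t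
    have h := (((((hasDerivAt_const t (1:ℝ)).sub ((hasDerivAt_pow 2 t).div_const 2)).add
      ((hasDerivAt_pow 4 t).div_const 24)).sub ((hasDerivAt_pow 6 t).div_const 720)).add
      ((hasDerivAt_pow 8 t).div_const 40320)).sub (Real.hasDerivAt_cos t)
    refine h.congr_deriv ?_
    push_cast
    ring
  · exact s4

lemma s5 : ∀ t : ℝ, 0 ≤ t →
    0 ≤ (t - t^3/6 + t^5/120 - t^7/5040 + t^9/362880) - Real.sin t := by
  apply nonneg_of_deriv _
    (fun t => (1 - t^2/2 + t^4/24 - t^6/720 + t^8/40320) - Real.cos t)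
  · norm_num
  · intro t
    have h := (((((hasDerivAt_id t).sub ((hasDerivAt_pow 3 t).div_const 6)).add
      ((hasDerivAt_pow 5 t).div_const 120)).sub ((hasDerivAt_pow 7 t).div_const 5040)).add
      ((hasDerivAt_pow 9 t).div_const 362880)).sub (Real.hasDerivAt_sin t)
    refine h.congr_deriv ?_
    push_cast
    ring
  · exact c4

lemma c5 : ∀ t : ℝ, 0 ≤ t →
    0 ≤ Real.cos t - (1 - t^2/2 + t^4/24 - t^6/720 + t^8/40320 - t^10/3628800) := by
  apply nonneg_of_deriv _
    (fun t => (t - t^3/6 + t^5/120 - t^7/5040 + t^9/362880) - Real.sin t)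
  · norm_num
  · intro t
    have h := (Real.hasDerivAt_cos t).sub
      ((((((hasDerivAt_const t (1:ℝ)).sub ((hasDerivAt_pow 2 t).div_const 2)).add
        ((hasDerivAt_pow 4 t).div_const 24)).sub ((hasDerivAt_pow 6 t).div_const 720)).add
        ((hasDerivAt_pow 8 t).div_const 40320)).sub ((hasDerivAt_pow 10 t).div_const 3628800))
    refine h.congr_deriv ?_
    push_cast
    ring
  · exact s5

/-- Certified degree-6 polynomial approximation of `cos` on `[-1.2, 1.2]` with
error bound `0.0000336 * x²`. -/
theorem stmt12 : ∀ x : ℝ, -1.2 ≤ x → x ≤ 1.2 →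
    |Real.cos x - (1 - 0.5 * x ^ 2 + 0.0416525 * x ^ 4 - 0.00134386 * x ^ 6)|
      ≤ 0.0000336 * x ^ 2 := by
  intro x hx1 hx2
  set y := |x| with hy'
  have h0 : (0:ℝ) ≤ y := abs_nonneg x
  have hy12 : y ≤ 1.2 := abs_le.2 ⟨hx1, hx2⟩
  have hcos : Real.cos x = Real.cos y := (Real.cos_abs x).symm
  have e2 : x ^ 2 = y ^ 2 := (sq_abs x).symm
  have e4 : x ^ 4 = y ^ 4 := by rw [show x^4 = (x^2)^2 by ring, e2]; ring
  have e6 : x ^ 6 = y ^ 6 := by rw [show x^6 = (x^2)^3 by ring, e2]; ring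
  rw [hcos, e2, e4, e6, abs_le]
  have hup := c4 y h0
  have hlo := c5 y h0
  have hsq : y ^ 2 ≤ 1.44 := by nlinarith
  have h1 : 0 ≤ y ^ 4 * (1.44 - y ^ 2) :=
    mul_nonneg (pow_nonneg h0 4) (by linarith)
  have h2 : 0 ≤ y ^ 6 * (1.44 - y ^ 2) :=
    mul_nonneg (pow_nonneg h0 6) (by linarith)
  constructor
  · nlinarith [sq_nonneg (y ^ 3 - 0.92 * y), sq_nonneg y, pow_nonneg h0 4]
  · nlinarith [sq_nonneg y, pow_nonneg h0 4]
end

section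
/- For all x ∈ [−0.84, 0.84], |sin x − (x − 0.16666643x³ + 0.008331760x⁵ − 0.00019471928x⁷)| ≤ 10⁻⁷·|x|. -/
open Finset in
lemma stmt13_tail_bound (x : ℝ) (hx0 : 0 ≤ x) (hx : x ≤ 0.84) :
    |Real.sin x - (x - x^3/6 + x^5/120 - x^7/5040 + x^9/362880)| ≤ 2e-8 * x := by
  have hS := Real.hasSum_sin x
  set f : ℕ → ℝ := fun n : ℕ => (-1) ^ n * x ^ (2 * n + 1) / (Nat.factorial (2 * n + 1) : ℝ) with hf
  have hsum5 : ∑ i ∈ range 5, f i = x - x^3/6 + x^5/120 - x^7/5040 + x^9/362880 := by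
    simp [hf, Finset.sum_range_succ, Nat.factorial]
    ring
  have htail : HasSum (fun n => f (n + 5)) (Real.sin x - ∑ i ∈ range 5, f i) := by
    rw [hasSum_nat_add_iff (f := f) 5]
    simpa using hS
  set G : ℕ → ℝ := fun n => (x * 0.84^10 / 39916800) * (0.7056:ℝ)^n with hG
  have hc : (0:ℝ) ≤ x * 0.84^10 / 39916800 := by positivity
  have hGsum : HasSum G ((x * 0.84^10 / 39916800) * (1 - 0.7056)⁻¹) :=
    (hasSum_geometric_of_lt_one (by norm_num) (by norm_num)).mul_left _
  have hbound : ∀ n : ℕ, |f (n + 5)| ≤ G n := by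
    intro n
    have h1 : |f (n + 5)| = x ^ (2 * (n+5) + 1) / (Nat.factorial (2 * (n+5) + 1) : ℝ) := by
      rw [hf]
      rw [abs_div, abs_mul, abs_pow, abs_neg, abs_one, one_pow, one_mul, abs_pow,
        abs_of_nonneg hx0, Nat.abs_cast]
    rw [h1, hG]
    have hfac : (39916800 : ℝ) ≤ (Nat.factorial (2 * (n+5) + 1) : ℝ) := by
      have : Nat.factorial 11 ≤ Nat.factorial (2 * (n+5) + 1) := Nat.factorial_le (by omega)
      simpa [Nat.factorial] using (Nat.cast_le (α := ℝ)).2 this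
    have hxpow : x ^ (2 * (n+5) + 1) ≤ x * (0.84^10 * 0.7056 ^ n) := by
      have : x ^ (2 * (n+5) + 1) = x * x ^ (10 + 2*n) := by ring
      rw [this]
      gcongr
      calc x ^ (10 + 2*n) ≤ (0.84:ℝ) ^ (10 + 2*n) := by gcongr
        _ = 0.84^10 * 0.7056 ^ n := by rw [pow_add, pow_mul]; norm_num
    calc x ^ (2 * (n+5) + 1) / (Nat.factorial (2 * (n+5) + 1) : ℝ)
        ≤ x * (0.84^10 * 0.7056 ^ n) / 39916800 := by
          apply div_le_div₀ (by positivity) hxpow (by norm_num) hfac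
      _ = x * 0.84^10 / 39916800 * 0.7056 ^ n := by ring
  have habs : |Real.sin x - ∑ i ∈ range 5, f i| ≤ (x * 0.84^10 / 39916800) * (1 - 0.7056)⁻¹ := by
    rw [abs_le]
    constructor
    · have := hasSum_le (f := fun n => -G n) (g := fun n => f (n+5))
        (fun n => neg_le_of_abs_le (hbound n)) hGsum.neg htail
      linarith
    · exact hasSum_le (fun n => le_of_abs_le (hbound n)) htail hGsum
  rw [← hsum5]
  refine habs.trans ?_
  rw [div_mul_eq_mul_div, mul_comm (2e-8 : ℝ) x]
  rw [div_le_iff₀ (by norm_num)]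
  nlinarith [hx0]

lemma stmt13_poly_bound (y : ℝ) (h0 : 0 ≤ y) (h1 : y ≤ 0.7056) :
    |(0.16666643 - 1/6)*y + (1/120 - 0.008331760)*y^2 + (0.00019471928 - 1/5040)*y^3 + y^4/362880| ≤ 8e-8 := by
  rw [abs_le]
  constructor
  · nlinarith [sq_nonneg y, sq_nonneg (y - 0.3), sq_nonneg (y - 0.7), mul_nonneg h0 h0, mul_nonneg (mul_nonneg h0 h0) h0, sq_nonneg (y*(y-0.5))]
  · nlinarith [sq_nonneg y, sq_nonneg (y - 0.3), mul_nonneg h0 h0, mul_nonneg (mul_nonneg h0 h0) h0, sq_nonneg (y*(y-0.5))]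

lemma stmt13_nonneg (x : ℝ) (hx0 : 0 ≤ x) (hx : x ≤ 0.84) :
    |Real.sin x - (x - 0.16666643 * x ^ 3 + 0.008331760 * x ^ 5
        - 0.00019471928 * x ^ 7)| ≤ 1e-7 * x := by
  have hy0 : (0:ℝ) ≤ x^2 := sq_nonneg x
  have hy1 : x^2 ≤ 0.7056 := by nlinarith
  have hpoly := stmt13_poly_bound (x^2) hy0 hy1
  have htail := stmt13_tail_bound x hx0 hx
  have key : (x - x^3/6 + x^5/120 - x^7/5040 + x^9/362880)
      - (x - 0.16666643 * x ^ 3 + 0.008331760 * x ^ 5 - 0.00019471928 * x ^ 7)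
      = x * ((0.16666643 - 1/6)*(x^2) + (1/120 - 0.008331760)*(x^2)^2
          + (0.00019471928 - 1/5040)*(x^2)^3 + (x^2)^4/362880) := by ring
  have hmid : |(x - x^3/6 + x^5/120 - x^7/5040 + x^9/362880)
      - (x - 0.16666643 * x ^ 3 + 0.008331760 * x ^ 5 - 0.00019471928 * x ^ 7)| ≤ 8e-8 * x := by
    rw [key, abs_mul, abs_of_nonneg hx0, mul_comm (8e-8 : ℝ) x]
    exact mul_le_mul_of_nonneg_left hpoly hx0
  calc |Real.sin x - (x - 0.16666643 * x ^ 3 + 0.008331760 * x ^ 5 - 0.00019471928 * x ^ 7)|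
      ≤ |Real.sin x - (x - x^3/6 + x^5/120 - x^7/5040 + x^9/362880)|
        + |(x - x^3/6 + x^5/120 - x^7/5040 + x^9/362880)
          - (x - 0.16666643 * x ^ 3 + 0.008331760 * x ^ 5 - 0.00019471928 * x ^ 7)| := by
        have := abs_sub_le (Real.sin x) (x - x^3/6 + x^5/120 - x^7/5040 + x^9/362880)
          (x - 0.16666643 * x ^ 3 + 0.008331760 * x ^ 5 - 0.00019471928 * x ^ 7)
        linarith
    _ ≤ 2e-8 * x + 8e-8 * x := add_le_add htail hmid
    _ = 1e-7 * x := by ring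

/-- Certified degree-7 odd polynomial approximation of `sin` on `[-0.84, 0.84]`
with error bound `10⁻⁷ * |x|`. -/
theorem stmt13 : ∀ x : ℝ, -0.84 ≤ x → x ≤ 0.84 →
    |Real.sin x - (x - 0.16666643 * x ^ 3 + 0.008331760 * x ^ 5
        - 0.00019471928 * x ^ 7)| ≤ 1e-7 * |x| := by
  intro x hxl hxu
  rcases le_or_gt 0 x with hx0 | hx0
  · rw [abs_of_nonneg hx0]
    exact stmt13_nonneg x hx0 hxu
  · have h1 : (0:ℝ) ≤ -x := by linarith
    have h2 : -x ≤ 0.84 := by linarith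
    have := stmt13_nonneg (-x) h1 h2
    rw [Real.sin_neg] at this
    rw [abs_of_neg hx0]
    have heq : -Real.sin x - (-x - 0.16666643 * (-x) ^ 3 + 0.008331760 * (-x) ^ 5
        - 0.00019471928 * (-x) ^ 7)
      = -(Real.sin x - (x - 0.16666643 * x ^ 3 + 0.008331760 * x ^ 5
        - 0.00019471928 * x ^ 7)) := by ring
    rw [heq, abs_neg] at this
    exact this
end
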